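/- Let $k$ be an algebraically closed field of characteristic $p > 0$, let $f(y) = x_0(1 + y^{d-s}(y+1)^s) - y^{d-p-s}(y+1)^s \in k[[x_0]][y]$ where $p$ is odd, $d = ap$, $a \geq 3$, $1 \leq s \leq p-1$. Suppose $f = g \cdot h_1 \cdot h_2$ in $k[[x_0]][y]$ with $g \equiv -1 \pmod{x_0}$ of degree $p$, $h_1 \equiv y^{d-p-s} \pmod{x_0}$ of degree $d-p-s$, and $h_2 \equiv (y+1)^s \pmod{x_0}$ of degree $s$. Then $h_1$ is an Eisenstein polynomial with respect to the maximal ideal $(x_0)$ of $k[[x_0]]$: its leading coefficient is a unit, all lower coefficients lie in $(x_0)$, and its constant coefficient has $x_0$-valuation exactly $1$. -/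

import Mathlib

open Polynomial

/-- With `f(y) = x₀(1 + y^{d-s}(y+1)^s) - y^{d-p-s}(y+1)^s ∈ k[[x₀]][y]` and a
Hensel factorization `f = g·h₁·h₂` with `g ≡ -1`, `h₁ ≡ y^{d-p-s}`,
`h₂ ≡ (y+1)^s (mod x₀)` of the indicated degrees, the factor `h₁` is Eisenstein
at `(x₀)`: its leading coefficient is a unit, all lower coefficients lie in
`(x₀)`, and its constant coefficient has `x₀`-valuation exactly `1`. -/
theorem hensel_factor_eisenstein (p a d s : ℕ) (hp : p.Prime) (hodd : Odd p)
    (ha : 3 ≤ a) (hd : d = a * p) (hs1 : 1 ≤ s) (hs2 : s ≤ p - 1)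
    (k : Type*) [Field k] [IsAlgClosed k] [CharP k p]
    (g h₁ h₂ : Polynomial (PowerSeries k))
    (hf : (C PowerSeries.X * (1 + X ^ (d - s) * (X + 1) ^ s) -
        X ^ (d - p - s) * (X + 1) ^ s : Polynomial (PowerSeries k)) = g * h₁ * h₂)
    (hg : g.map (PowerSeries.constantCoeff : PowerSeries k →+* k) = -1) (hgdeg : g.natDegree = p)
    (hh₁ : h₁.map (PowerSeries.constantCoeff : PowerSeries k →+* k) = X ^ (d - p - s))
    (hh₁deg : h₁.natDegree = d - p - s)
    (hh₂ : h₂.map (PowerSeries.constantCoeff : PowerSeries k →+* k) = (X + 1) ^ s)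
    (hh₂deg : h₂.natDegree = s) :
    IsUnit h₁.leadingCoeff ∧
    (∀ n < h₁.natDegree, h₁.coeff n ∈ Ideal.span {(PowerSeries.X : PowerSeries k)}) ∧
    h₁.coeff 0 ∈ Ideal.span {(PowerSeries.X : PowerSeries k)} ∧
    h₁.coeff 0 ∉ (Ideal.span {(PowerSeries.X : PowerSeries k)}) ^ 2 := by
  have hp3 : 3 ≤ p := by rcases hodd with ⟨m, hm⟩; have := hp.two_le; omega
  have h3p : 3 * p ≤ d := hd ▸ Nat.mul_le_mul_right p ha
  have hds : 0 < d - s := by omega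
  have hdps : 0 < d - p - s := by omega
  -- constant coeff facts
  have hcoef : ∀ (q : Polynomial (PowerSeries k)) (n : ℕ),
      (PowerSeries.constantCoeff : PowerSeries k →+* k) (q.coeff n) = (q.map (PowerSeries.constantCoeff : PowerSeries k →+* k)).coeff n := by
    intro q n; rw [coeff_map]
  have hg0 : IsUnit (g.coeff 0) := by
    rw [PowerSeries.isUnit_iff_constantCoeff, hcoef, hg]
    simp
  have hXp0 : (((X:Polynomial (PowerSeries k)) + 1) ^ s).coeff 0 = 1 := by
    simp [coeff_zero_eq_eval_zero]
  have hh20 : IsUnit (h₂.coeff 0) := by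
    rw [PowerSeries.isUnit_iff_constantCoeff, hcoef, hh₂]
    simp [coeff_zero_eq_eval_zero]
  -- coeff 0 of the equation
  have h0 : (PowerSeries.X : PowerSeries k) = g.coeff 0 * h₁.coeff 0 * h₂.coeff 0 := by
    have := congrArg (fun q => Polynomial.coeff q 0) hf
    simpa [mul_coeff_zero, coeff_X_pow, hds.ne, hdps.ne, hXp0] using this
  refine ⟨?_, ?_, ?_, ?_⟩
  · rw [Polynomial.leadingCoeff, PowerSeries.isUnit_iff_constantCoeff, hcoef, hh₁, hh₁deg]
    simp
  · intro n hn
    rw [hh₁deg] at hn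
    rw [Ideal.mem_span_singleton, PowerSeries.X_dvd_iff, hcoef, hh₁, coeff_X_pow,
      if_neg (by omega)]
  · rw [Ideal.mem_span_singleton, PowerSeries.X_dvd_iff, hcoef, hh₁, coeff_X_pow,
      if_neg (by omega)]
  · intro hmem
    rw [Ideal.span_singleton_pow, Ideal.mem_span_singleton] at hmem
    obtain ⟨t, ht⟩ := hmem
    have hX : (PowerSeries.X : PowerSeries k)
        = PowerSeries.X ^ 2 * (t * (g.coeff 0 * h₂.coeff 0)) := by
      rw [ht] at h0; linear_combination h0
    have h1 : (1 : PowerSeries k) = PowerSeries.X * (t * (g.coeff 0 * h₂.coeff 0)) := by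
      apply mul_left_cancel₀ (PowerSeries.X_ne_zero (R := k))
      calc PowerSeries.X * 1 = PowerSeries.X := mul_one _
        _ = _ := hX.trans (by ring)
    have := congrArg (PowerSeries.constantCoeff : PowerSeries k →+* k) h1
    simp at this
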